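/- For every positive integer i, the series ∑_{k=1}^∞ H_k/(k(i+k)) converges and equals H_i^{(2)}/(2i) + H_i^2/(2i) - H_i/i^2 + ζ(2)/i, where ζ(2) = π²/6. -/

import Mathlib

open Finset Real

noncomputable def H (k : ℕ) : ℝ := ∑ j ∈ Finset.range k, (1 : ℝ) / ((j : ℝ) + 1)
noncomputable def H2 (k : ℕ) : ℝ := ∑ j ∈ Finset.range k, (1 : ℝ) / ((j : ℝ) + 1) ^ 2
noncomputable def H3 (k : ℕ) : ℝ := ∑ j ∈ Finset.range k, (1 : ℝ) / ((j : ℝ) + 1) ^ 3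
noncomputable def h (k : ℕ) : ℝ := ∑ j ∈ Finset.range k, (1 : ℝ) / (2 * (j : ℝ) + 1)
noncomputable def h2 (k : ℕ) : ℝ := ∑ j ∈ Finset.range k, (1 : ℝ) / (2 * (j : ℝ) + 1) ^ 2
noncomputable def h3 (k : ℕ) : ℝ := ∑ j ∈ Finset.range k, (1 : ℝ) / (2 * (j : ℝ) + 1) ^ 3
noncomputable def zeta (s : ℕ) : ℝ := ∑' n : ℕ, (1 : ℝ) / ((n : ℝ) + 1) ^ s

open Filter Topology

section Aux

lemma H_succ' (k : ℕ) : H (k + 1) = H k + 1 / ((k : ℝ) + 1) := Finset.sum_range_succ _ _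

lemma H2_succ' (k : ℕ) : H2 (k + 1) = H2 k + 1 / ((k : ℝ) + 1) ^ 2 := Finset.sum_range_succ _ _

lemma H_nonneg' (k : ℕ) : 0 ≤ H k := Finset.sum_nonneg fun j _ => by positivity

lemma H_one' : H 1 = 1 := by simp [H]

lemma shift_sum' (g : ℕ → ℝ) (i : ℕ) :
    ∑ j ∈ range i, g (j + 1) = ∑ j ∈ range i, g j + g i - g 0 := by
  have h1 := Finset.sum_range_succ g i
  have h2 := Finset.sum_range_succ' g i
  linarith

lemma rangeHarm' (n : ℕ) : ∀ i : ℕ,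
    ∑ j ∈ range i, (1 : ℝ) / ((n : ℝ) + 1 + (j : ℝ)) = H (n + i) - H n
  | 0 => by simp
  | i + 1 => by
    rw [sum_range_succ, rangeHarm' n i, show n + (i + 1) = (n + i) + 1 from rfl, H_succ']
    push_cast; ring

lemma sq_sum' : ∀ i : ℕ, ∑ k ∈ range i, H (k + 1) / ((k : ℝ) + 1) = ((H i) ^ 2 + H2 i) / 2
  | 0 => by simp [H, H2]
  | i + 1 => by
    rw [sum_range_succ, sq_sum' i, H_succ', H2_succ']
    have hne : ((i:ℝ) + 1) ≠ 0 := by positivity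
    field_simp
    ring

lemma H_le_log' : ∀ n : ℕ, 1 ≤ n → H n ≤ 1 + Real.log n := by
  intro n hn
  induction n with
  | zero => omega
  | succ m ih =>
    rcases Nat.eq_or_lt_of_le hn with hh | hh
    · have hm0 : m = 0 := by omega
      subst hm0; simp [H]
    · have hm : 1 ≤ m := by omega
      have hmpos : (0:ℝ) < m := by exact_mod_cast hm
      have key : Real.log m + 1 / ((m:ℝ) + 1) ≤ Real.log (m + 1) := by
        have h1 : Real.log ((m:ℝ) / (m + 1)) ≤ (m:ℝ) / (m + 1) - 1 :=
          Real.log_le_sub_one_of_pos (by positivity)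
        rw [Real.log_div (ne_of_gt hmpos) (by positivity)] at h1
        have : (m:ℝ) / (m + 1) - 1 = -(1 / ((m:ℝ)+1)) := by field_simp; ring
        rw [this] at h1; linarith
      have := ih hm
      rw [H_succ']
      push_cast
      linarith

lemma tendsto_H_div' : Tendsto (fun n : ℕ => H n / n) atTop (𝓝 0) := by
  have hlog : Tendsto (fun n : ℕ => Real.log n / n) atTop (𝓝 0) :=
    (Real.isLittleO_log_id_atTop.tendsto_div_nhds_zero).comp tendsto_natCast_atTop_atTop
  have hone : Tendsto (fun n : ℕ => 1 / (n:ℝ)) atTop (𝓝 0) :=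
    tendsto_one_div_atTop_nhds_zero_nat
  have hbd : Tendsto (fun n : ℕ => 1 / (n:ℝ) + Real.log n / n) atTop (𝓝 0) := by
    simpa using hone.add hlog
  apply squeeze_zero_norm' _ hbd
  filter_upwards [eventually_ge_atTop 1] with n hn
  have hnpos : (0:ℝ) < n := by exact_mod_cast hn
  rw [Real.norm_eq_abs, abs_of_nonneg (div_nonneg (H_nonneg' n) hnpos.le)]
  rw [← add_div]
  have := H_le_log' n hn
  gcongr

lemma tendsto_H_shift' (c : ℕ) : Tendsto (fun n : ℕ => H (n + c) - H n) atTop (𝓝 0) := by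
  have hbd : Tendsto (fun n : ℕ => (c : ℝ) / n) atTop (𝓝 0) :=
    tendsto_const_div_atTop_nhds_zero_nat (c : ℝ)
  apply squeeze_zero_norm' _ hbd
  filter_upwards [eventually_ge_atTop 1] with n hn
  have hnpos : (0:ℝ) < n := by exact_mod_cast hn
  have heq := rangeHarm' n c
  have h0 : 0 ≤ H (n + c) - H n := by
    rw [← heq]; exact Finset.sum_nonneg fun j _ => by positivity
  rw [Real.norm_eq_abs, abs_of_nonneg h0, ← heq]
  calc ∑ j ∈ range c, (1:ℝ) / ((n:ℝ) + 1 + j)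
      ≤ ∑ j ∈ range c, (1:ℝ) / (n:ℝ) := by
        apply Finset.sum_le_sum; intro j _
        apply one_div_le_one_div_of_le hnpos
        have : (0:ℝ) ≤ j := Nat.cast_nonneg j
        linarith
    _ = (c : ℝ) / n := by rw [Finset.sum_const, card_range]; ring

lemma tendsto_H2' : Tendsto (fun n : ℕ => H2 n) atTop (𝓝 (π ^ 2 / 6)) := by
  have h := hasSum_zeta_two.tendsto_sum_nat
  have h2 := h.comp (tendsto_add_atTop_nat 1)
  apply h2.congr
  intro n
  simp only [Function.comp]
  rw [Finset.sum_range_succ']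
  simp only [Nat.cast_zero, H2]
  push_cast
  norm_num

lemma key' (i : ℕ) (hi : 0 < i) : ∀ n : ℕ,
    (i : ℝ) * ∑ k ∈ range n, H (k + 1) / (((k : ℝ) + 1) * ((i : ℝ) + ((k : ℝ) + 1)))
      = ∑ k ∈ range i, H (k + 1) / ((k : ℝ) + 1)
        - ∑ j ∈ range i, H (n + 1 + j) / ((n : ℝ) + 1 + (j : ℝ))
        + (H2 (n + i) - H2 i)
        + ∑ j ∈ Ico 1 i, (1 / ((i : ℝ) - (j : ℝ))) * (H (n + j) - H j - H (n + i) + H i)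
  | 0 => by
    have e1 : ∑ j ∈ range i, H (0 + 1 + j) / ((0 : ℕ) + 1 + (j : ℝ))
        = ∑ k ∈ range i, H (k + 1) / ((k : ℝ) + 1) := by
      apply sum_congr rfl; intro j _
      rw [show 0 + 1 + j = j + 1 by omega]
      norm_num [add_comm]
    have e2 : ∑ j ∈ Ico 1 i, (1 / ((i : ℝ) - (j : ℝ))) * (H (0 + j) - H j - H (0 + i) + H i)
        = 0 := by
      apply sum_eq_zero; intro j _
      simp only [Nat.zero_add]
      ring
    simp only [sum_range_zero, mul_zero, Nat.zero_add, Nat.cast_zero] at *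
    rw [e1, e2]
    ring
  | n + 1 => by
    have hi' : (0:ℝ) < i := by exact_mod_cast hi
    rw [sum_range_succ, mul_add, key' i hi n]
    have hc : H (n + 1 + i) = H (n + i) + 1 / ((n : ℝ) + 1 + (i : ℝ)) := by
      rw [show n + 1 + i = (n + i) + 1 by omega, H_succ']; push_cast; ring_nf
    have hP1 : ∑ j ∈ range i, H (n + 1 + 1 + j) / (((n:ℕ) : ℝ) + 1 + 1 + (j : ℝ))
        = ∑ j ∈ range i, H (n + 1 + j) / ((n : ℝ) + 1 + (j : ℝ))
          + H (n + 1 + i) / ((n : ℝ) + 1 + (i : ℝ)) - H (n + 1) / ((n : ℝ) + 1) := by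
      have hs := shift_sum' (fun m => H (n + 1 + m) / ((n : ℝ) + 1 + (m : ℝ))) i
      have e : ∑ j ∈ range i, H (n + 1 + 1 + j) / (((n:ℕ) : ℝ) + 1 + 1 + (j : ℝ))
          = ∑ j ∈ range i, H (n + 1 + (j + 1)) / ((n : ℝ) + 1 + ((j : ℝ) + 1)) := by
        apply sum_congr rfl; intro j _
        rw [show n + 1 + 1 + j = n + 1 + (j + 1) by omega]
        ring_nf
      push_cast at hs
      rw [e, hs]
      push_cast
      norm_num
    have hP2 : H2 (n + 1 + i) = H2 (n + i) + 1 / ((n : ℝ) + 1 + (i : ℝ)) ^ 2 := by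
      rw [show n + 1 + i = (n + i) + 1 by omega, H2_succ']; push_cast; ring_nf
    have hP3 : ∑ j ∈ Ico 1 i, (1 / ((i : ℝ) - (j : ℝ))) *
          (H (n + 1 + j) - H j - H (n + 1 + i) + H i)
        = ∑ j ∈ Ico 1 i, (1 / ((i : ℝ) - (j : ℝ))) * (H (n + j) - H j - H (n + i) + H i)
          + (1 / ((n : ℝ) + 1 + (i : ℝ))) * (H (n + i) - H (n + 1)) := by
      have step : ∀ j ∈ Ico 1 i, (1 / ((i : ℝ) - (j : ℝ))) *
            (H (n + 1 + j) - H j - H (n + 1 + i) + H i)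
          = (1 / ((i : ℝ) - (j : ℝ))) * (H (n + j) - H j - H (n + i) + H i)
            + (1 / ((n : ℝ) + 1 + (i : ℝ))) * (1 / ((n : ℝ) + 1 + (j : ℝ))) := by
        intro j hj
        rw [mem_Ico] at hj
        have hji : (j : ℝ) < i := by exact_mod_cast hj.2
        have hne : (i : ℝ) - j ≠ 0 := by
          have : (0:ℝ) < (i : ℝ) - j := by linarith
          exact ne_of_gt this
        have hj' : H (n + 1 + j) = H (n + j) + 1 / ((n : ℝ) + (j : ℝ) + 1) := by
          rw [show n + 1 + j = (n + j) + 1 by omega, H_succ']; push_cast; ring_nf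
        rw [hj', hc]
        have d1 : (0:ℝ) < (n : ℝ) + 1 + j := by positivity
        have d2 : (0:ℝ) < (n : ℝ) + 1 + i := by positivity
        field_simp
        ring
      rw [sum_congr rfl step, sum_add_distrib]
      congr 1
      rw [← mul_sum]
      congr 1
      have h0 := rangeHarm' n i
      rw [Finset.range_eq_Ico, Finset.sum_eq_sum_Ico_succ_bot hi] at h0
      have h1 := H_succ' n
      push_cast at h0
      norm_num at h0
      simp only [one_div] at h1 ⊢
      linarith
    push_cast
    rw [hP1, hP2, hP3, hc]
    have d1 : ((n : ℝ) + 1) ≠ 0 := by positivity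
    have d2 : ((n : ℝ) + 1 + i) ≠ 0 := by positivity
    field_simp
    ring

lemma Hsplit' (i : ℕ) (hi : 0 < i) : H i = 1 + ∑ j ∈ Ico 1 i, 1 / ((j : ℝ) + 1) := by
  have : H i = ∑ j ∈ Ico 0 i, (1:ℝ) / ((j : ℝ) + 1) := by rw [← Finset.range_eq_Ico]; rfl
  rw [this, Finset.sum_eq_sum_Ico_succ_bot hi]
  norm_num

lemma Tid' (i : ℕ) (hi1 : 1 ≤ i) :
    ∑ j ∈ Ico 1 i, (1 / ((i : ℝ) - (j : ℝ))) * (H i - H j) = H2 i - H i / i := by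
  induction i, hi1 using Nat.le_induction with
  | base => simp [H, H2]
  | succ i hi ih =>
    have hi0 : 0 < i := hi
    have hiR : (0:ℝ) < i := by exact_mod_cast hi0
    have e0 : ∑ j ∈ Ico 1 (i+1), (1 / (((i:ℕ)+1 : ℝ) - (j : ℝ))) * (H (i+1) - H j)
        = ∑ j ∈ range i, (1 / (((i : ℝ)+1) - ((1+j : ℕ) : ℝ))) * (H (i+1) - H (1+j)) := by
      rw [Finset.sum_Ico_eq_sum_range]
      simp
    rw [show ((i:ℕ)+1 : ℕ) = i + 1 from rfl]
    push_cast
    rw [e0, Finset.range_eq_Ico, Finset.sum_eq_sum_Ico_succ_bot hi0]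
    have e1 : ∀ j ∈ Ico 1 i, (1 / (((i : ℝ)+1) - ((1+j : ℕ) : ℝ))) * (H (i+1) - H (1+j))
        = (1 / ((i : ℝ) - (j : ℝ))) * (H i - H j) - 1/(((i:ℝ)+1)*((j:ℝ)+1)) := by
      intro j hj
      rw [mem_Ico] at hj
      have hjR : (j:ℝ) < i := by exact_mod_cast hj.2
      have h1 : (0:ℝ) < (i:ℝ) - j := by linarith
      rw [show 1 + j = j + 1 by omega, H_succ', H_succ']
      push_cast
      have h2 : (0:ℝ) < (j:ℝ) + 1 := by positivity
      have h3 : (i:ℝ) - j ≠ 0 := ne_of_gt h1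
      have h4 : (i:ℝ) + 1 - ((j:ℝ) + 1) ≠ 0 := by intro h; linarith
      field_simp
      ring
    rw [sum_congr rfl e1, sum_sub_distrib, ih]
    have hsum : ∑ j ∈ Ico 1 i, (1:ℝ)/((j:ℝ)+1) = H i - 1 := by
      have := Hsplit' i hi0; linarith
    have e2 : ∑ j ∈ Ico 1 i, 1/(((i:ℝ)+1)*((j:ℝ)+1))
        = (1/((i:ℝ)+1)) * (H i - 1) := by
      calc ∑ j ∈ Ico 1 i, 1/(((i:ℝ)+1)*((j:ℝ)+1))
          = ∑ j ∈ Ico 1 i, (1/((i:ℝ)+1)) * (1/((j:ℝ)+1)) := by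
            refine sum_congr rfl fun j _ => ?_
            rw [div_mul_div_comm]; norm_num
        _ = (1/((i:ℝ)+1)) * ∑ j ∈ Ico 1 i, (1:ℝ)/((j:ℝ)+1) := by rw [mul_sum]
        _ = (1/((i:ℝ)+1)) * (H i - 1) := by rw [hsum]
    rw [e2, H_succ', H2_succ']
    push_cast
    norm_num [H_one']
    field_simp
    ring

end Aux

theorem stmt0 (i : ℕ) (hi : 0 < i) :
    HasSum (fun k : ℕ => H (k + 1) / (((k : ℝ) + 1) * ((i : ℝ) + ((k : ℝ) + 1))))
      (H2 i / (2 * (i : ℝ)) + (H i) ^ 2 / (2 * (i : ℝ)) - H i / (i : ℝ) ^ 2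
        + (Real.pi ^ 2 / 6) / (i : ℝ)) := by
  have hiR : (0:ℝ) < i := by exact_mod_cast hi
  have hnn : ∀ k : ℕ, 0 ≤ H (k + 1) / (((k : ℝ) + 1) * ((i : ℝ) + ((k : ℝ) + 1))) := by
    intro k
    have h1 := H_nonneg' (k + 1)
    positivity
  rw [hasSum_iff_tendsto_nat_of_nonneg hnn]
  -- limits of the pieces
  have l1 : Tendsto (fun n : ℕ => ∑ j ∈ range i, H (n + 1 + j) / ((n : ℝ) + 1 + (j : ℝ)))
      atTop (𝓝 0) := by
    have h := tendsto_finset_sum (range i)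
      (fun j (_ : j ∈ range i) => tendsto_H_div'.comp (tendsto_add_atTop_nat (1 + j)))
    simp only [Finset.sum_const_zero] at h
    apply h.congr
    intro n
    apply sum_congr rfl
    intro j _
    simp only [Function.comp]
    rw [show n + (1 + j) = n + 1 + j by omega]
    push_cast
    ring_nf
  have l2 : Tendsto (fun n : ℕ => H2 (n + i)) atTop (𝓝 (π ^ 2 / 6)) :=
    tendsto_H2'.comp (tendsto_add_atTop_nat i)
  have l3 : Tendsto (fun n : ℕ => ∑ j ∈ Ico 1 i,
        (1 / ((i : ℝ) - (j : ℝ))) * (H (n + j) - H j - H (n + i) + H i)) atTop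
      (𝓝 (∑ j ∈ Ico 1 i, (1 / ((i : ℝ) - (j : ℝ))) * (H i - H j))) := by
    refine tendsto_finset_sum _ (fun j hj => ?_)
    rw [mem_Ico] at hj
    have hd : Tendsto (fun n : ℕ => H (n + i) - H (n + j)) atTop (𝓝 0) := by
      have hh := (tendsto_H_shift' (i - j)).comp (tendsto_add_atTop_nat j)
      apply hh.congr
      intro n
      simp only [Function.comp]
      rw [show n + j + (i - j) = n + i by omega]
    have hb : Tendsto (fun n : ℕ => H (n + j) - H j - H (n + i) + H i) atTop
        (𝓝 (H i - H j)) := by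
      have h2' : Tendsto (fun n : ℕ => (H i - H j) - (H (n + i) - H (n + j))) atTop
          (𝓝 ((H i - H j) - 0)) := tendsto_const_nhds.sub hd
      rw [sub_zero] at h2'
      apply h2'.congr
      intro n; ring
    simpa using hb.const_mul (1 / ((i : ℝ) - (j : ℝ)))
  set C := ∑ k ∈ range i, H (k + 1) / ((k : ℝ) + 1) with hC
  have comb : Tendsto (fun n : ℕ => C - (∑ j ∈ range i, H (n + 1 + j) / ((n : ℝ) + 1 + (j : ℝ)))
        + (H2 (n + i) - H2 i)
        + ∑ j ∈ Ico 1 i, (1 / ((i : ℝ) - (j : ℝ))) * (H (n + j) - H j - H (n + i) + H i))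
      atTop (𝓝 (C - 0 + (π ^ 2 / 6 - H2 i)
        + ∑ j ∈ Ico 1 i, (1 / ((i : ℝ) - (j : ℝ))) * (H i - H j))) :=
    ((tendsto_const_nhds.sub l1).add (l2.sub tendsto_const_nhds)).add l3
  have lF : Tendsto (fun n : ℕ =>
      (i : ℝ) * ∑ k ∈ range n, H (k + 1) / (((k : ℝ) + 1) * ((i : ℝ) + ((k : ℝ) + 1))))
      atTop (𝓝 (C - 0 + (π ^ 2 / 6 - H2 i)
        + ∑ j ∈ Ico 1 i, (1 / ((i : ℝ) - (j : ℝ))) * (H i - H j))) := by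
    apply comb.congr
    intro n
    exact (key' i hi n).symm
  have lS := lF.const_mul ((i : ℝ)⁻¹)
  have hiRne : (i : ℝ) ≠ 0 := ne_of_gt hiR
  have heq : ∀ n : ℕ, (i : ℝ)⁻¹ * ((i : ℝ) *
      ∑ k ∈ range n, H (k + 1) / (((k : ℝ) + 1) * ((i : ℝ) + ((k : ℝ) + 1))))
      = ∑ k ∈ range n, H (k + 1) / (((k : ℝ) + 1) * ((i : ℝ) + ((k : ℝ) + 1))) := by
    intro n
    rw [← mul_assoc, inv_mul_cancel₀ hiRne, one_mul]
  have lS' := lS.congr heq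
  have hval : (i : ℝ)⁻¹ * (C - 0 + (π ^ 2 / 6 - H2 i)
      + ∑ j ∈ Ico 1 i, (1 / ((i : ℝ) - (j : ℝ))) * (H i - H j))
      = H2 i / (2 * (i : ℝ)) + (H i) ^ 2 / (2 * (i : ℝ)) - H i / (i : ℝ) ^ 2
        + (Real.pi ^ 2 / 6) / (i : ℝ) := by
    rw [hC, sq_sum' i, Tid' i hi]
    field_simp
    ring
  rw [← hval]
  exact lS'
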